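/- Let q' be a positive integer, and let w, W be integers. Suppose x, X are coprime integers and a, b are integers coprime to q' satisfying x·a ≡ w, X·a ≡ W (mod q') and x·b ≡ w, X·b ≡ W (mod q'). Then a ≡ b (mod q'/(gcd(x,q')·gcd(X,q'))). In particular, since gcd(x,q') and gcd(X,q') are coprime, the residue of a modulo q'/(gcd(x,q')·gcd(X,q')) is uniquely determined. -/

import Mathlib

lemma aux_cancel (q' x c : ℤ) (hq' : 0 < q') (h : q' ∣ x * c) :
    (q' / (Int.gcd x q' : ℤ)) ∣ c := by
  have hq0 : q' ≠ 0 := hq'.ne'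
  set d : ℤ := (Int.gcd x q' : ℤ) with hd
  have hdx : d ∣ x := Int.gcd_dvd_left _ _
  have hdq : d ∣ q' := Int.gcd_dvd_right _ _
  have hd0 : d ≠ 0 := by
    simp [hd, Int.gcd_eq_zero_iff, hq0]
  have hcop : Int.gcd (x / d) (q' / d) = 1 := Int.gcd_div_gcd_div_gcd (by
    have := Int.gcd_pos_of_ne_zero_right x hq0
    exact this)
  obtain ⟨k, hk⟩ := h
  have h2 : (q' / d) ∣ (x / d) * c := by
    refine ⟨k, ?_⟩
    have heq : d * ((x / d) * c) = d * ((q' / d) * k) := by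
      rw [← mul_assoc, ← mul_assoc, Int.mul_ediv_cancel' hdx, Int.mul_ediv_cancel' hdq]
      exact hk
    exact mul_left_cancel₀ hd0 heq
  have hcop' : IsCoprime (q' / d) (x / d) := by
    rw [Int.isCoprime_iff_gcd_eq_one, Int.gcd_comm]
    exact hcop
  exact hcop'.dvd_of_dvd_mul_left h2

theorem stmt_3 (q' : ℤ) (hq' : 0 < q') (w W x X a b : ℤ)
    (hxX : Int.gcd x X = 1)
    (ha : Int.gcd a q' = 1) (hb : Int.gcd b q' = 1)
    (h1 : q' ∣ (x * a - w)) (h2 : q' ∣ (X * a - W))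
    (h3 : q' ∣ (x * b - w)) (h4 : q' ∣ (X * b - W)) :
    (q' / ((Int.gcd x q' : ℤ) * (Int.gcd X q' : ℤ))) ∣ (a - b) := by
  set d1 : ℤ := (Int.gcd x q' : ℤ)
  set d2 : ℤ := (Int.gcd X q' : ℤ)
  have hdvd1 : q' ∣ x * (a - b) := by
    have := dvd_sub h1 h3; rwa [show x * a - w - (x * b - w) = x * (a - b) by ring] at this
  have key1 : (q' / d1) ∣ (a - b) := aux_cancel q' x (a - b) hq' hdvd1
  -- d2 ∣ q' / d1 ?  We show q'/(d1*d2) ∣ q'/d1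
  have hcop12 : IsCoprime d1 d2 := by
    rw [Int.isCoprime_iff_gcd_eq_one]
    have h1' : (Int.gcd d1 d2 : ℤ) ∣ x := dvd_trans (Int.gcd_dvd_left _ _) (Int.gcd_dvd_left _ _)
    have h2' : (Int.gcd d1 d2 : ℤ) ∣ X := dvd_trans (Int.gcd_dvd_right _ _) (Int.gcd_dvd_left _ _)
    have hdvd : (Int.gcd d1 d2 : ℤ) ∣ (Int.gcd x X : ℤ) := Int.dvd_coe_gcd h1' h2'
    have : Int.gcd d1 d2 ∣ Int.gcd x X := Int.natCast_dvd_natCast.mp hdvd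
    rw [hxX] at this
    exact Nat.dvd_one.mp this
  have hprod : d1 * d2 ∣ q' :=
    hcop12.mul_dvd (Int.gcd_dvd_right _ _) (Int.gcd_dvd_right _ _)
  obtain ⟨k, hk⟩ := hprod
  have hd1pos : 0 < d1 := Int.natCast_pos.mpr (Int.gcd_pos_of_ne_zero_right x hq'.ne')
  have hd2pos : 0 < d2 := Int.natCast_pos.mpr (Int.gcd_pos_of_ne_zero_right X hq'.ne')
  have hq1 : q' / d1 = d2 * k := by
    rw [hk, mul_assoc, Int.mul_ediv_cancel_left _ hd1pos.ne']
  have hq12 : q' / (d1 * d2) = k := by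
    rw [hk, Int.mul_ediv_cancel_left _ (by positivity)]
  exact dvd_trans (show q' / (d1 * d2) ∣ q' / d1 from ⟨d2, by rw [hq1, hq12]; ring⟩) key1
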